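/- For every integer k ≥ 166 and every α ∈ (0.9, 1]: φ(α) ≥ 2^{k-1}·ln 2 − (ln 2)/2 − 1/2 − 45·k^3·2^{-k}, where φ(α) = (ln 2 − h(α)) · (2^{k-1} + (2^{k-1} − 2)·k·(1−α) − 1/2) and h(α) = −α·ln α − (1−α)·ln(1−α) is the entropy function (with h(1) = 0). -/

import Mathlib

/-- The entropy function `h(α) = -α ln α - (1-α) ln(1-α)` (note `Real.log 0 = 0`,
so the convention `0 · ln 0 = 0` holds automatically). -/
noncomputable def entH (α : ℝ) : ℝ :=
  -α * Real.log α - (1 - α) * Real.log (1 - α)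

/-- `φ(α) = (ln 2 - h(α)) (2^(k-1) + (2^(k-1) - 2) k (1-α) - 1/2)`. -/
noncomputable def phiAM (k : ℕ) (α : ℝ) : ℝ :=
  (Real.log 2 - entH α) * (2 ^ (k - 1) + ((2 : ℝ) ^ (k - 1) - 2) * k * (1 - α) - 1 / 2)

private lemma inv_log_aux {x : ℝ} (hx : 0 < x) : 1 - x⁻¹ ≤ Real.log x := by
  have h := Real.log_le_sub_one_of_pos (inv_pos.mpr hx)
  rw [Real.log_inv] at h
  linarith

private lemma mul_one_sub_log_le_one {u : ℝ} (hu : 0 < u) : u * (1 - Real.log u) ≤ 1 := by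
  have h := inv_log_aux hu
  have h2 : u * (1 - Real.log u) ≤ u * u⁻¹ :=
    mul_le_mul_of_nonneg_left (by linarith) hu.le
  rwa [mul_inv_cancel₀ hu.ne'] at h2

private lemma mul_neg_log_le_one {u : ℝ} (hu : 0 < u) : u * (-Real.log u) ≤ 1 := by
  have h := mul_one_sub_log_le_one hu
  nlinarith

private lemma g_mono {β B : ℝ} (h0 : 0 < β) (h1 : β ≤ B) (h2 : B ≤ 1) :
    β * (1 - Real.log β) ≤ B * (1 - Real.log B) := by
  have hB : 0 < B := lt_of_lt_of_le h0 h1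
  have hq : 0 < B / β := div_pos hB h0
  have hlog : Real.log (B / β) ≤ B / β - 1 := Real.log_le_sub_one_of_pos hq
  have hdiv : Real.log (B / β) = Real.log B - Real.log β := Real.log_div hB.ne' h0.ne'
  have hBneg : Real.log B ≤ 0 := Real.log_nonpos hB.le h2
  have hfr : β * (B / β) = B := by field_simp
  nlinarith [mul_le_mul_of_nonneg_left hlog h0.le,
    mul_nonneg (sub_nonneg.2 h1) (neg_nonneg.2 hBneg)]

private lemma log_ten_ub : Real.log 10 ≤ 10 / 3 * Real.log 2 := by
  have h1 : Real.log ((10:ℝ) ^ 3) ≤ Real.log ((2:ℝ) ^ 10) :=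
    Real.log_le_log (by norm_num) (by norm_num)
  rw [Real.log_pow, Real.log_pow] at h1
  push_cast at h1
  linarith

private lemma log_ten_lb : (2.30 : ℝ) ≤ Real.log 10 := by
  have h1 : Real.log ((2:ℝ) ^ 166) ≤ Real.log ((10:ℝ) ^ 50) :=
    Real.log_le_log (by positivity) (by norm_num)
  rw [Real.log_pow, Real.log_pow] at h1
  push_cast at h1
  have := Real.log_two_gt_d9
  linarith

private lemma pow_ge_aux {j : ℕ} (hj : 20 ≤ j) : 324 * j ^ 2 ≤ 2 ^ j := by
  induction j, hj using Nat.le_induction with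
  | base => norm_num
  | succ n hn ih =>
    have h1 : 324 * (n + 1) ^ 2 ≤ 2 * (324 * n ^ 2) := by nlinarith
    calc 324 * (n + 1) ^ 2 ≤ 2 * (324 * n ^ 2) := h1
      _ ≤ 2 * 2 ^ n := by omega
      _ = 2 ^ (n + 1) := by ring

private lemma thirtysix_le {k : ℕ} (hk : 166 ≤ k) : 36 * k ^ 2 ≤ 2 ^ (9 * k / 20) := by
  set m := 9 * k / 20 with hm
  have hk3m : k ≤ 3 * m ∧ 74 ≤ m := by omega
  have h1 : 36 * k ^ 2 ≤ 324 * m ^ 2 := by nlinarith [hk3m.1]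
  have h2 : 324 * m ^ 2 ≤ 2 ^ m := pow_ge_aux (by omega)
  omega

private lemma hundredfive_le {k : ℕ} (hk : 166 ≤ k) : 105 * k ≤ 2 ^ k := by
  have h1 : k - 7 < 2 ^ (k - 7) := Nat.lt_two_pow_self
  have h2 : 2 ^ k = 128 * 2 ^ (k - 7) := by
    rw [show k = 7 + (k - 7) by omega, pow_add]
    norm_num
  omega

private lemma k_le_pow {k : ℕ} (hk : 166 ≤ k) : k ≤ 2 ^ (k - 1) := by
  have := Nat.lt_two_pow_self (n := k - 1)
  omega


set_option maxHeartbeats 2000000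

/-- For every `k ≥ 166` and every `α ∈ (0.9, 1]`:
`φ(α) ≥ 2^(k-1) ln 2 - (ln 2)/2 - 1/2 - 45 k³ 2^(-k)`. -/
theorem phiAM_min_bound (k : ℕ) (hk : 166 ≤ k) (α : ℝ) (hα : α ∈ Set.Ioc (0.9 : ℝ) 1) :
    phiAM k α ≥ 2 ^ (k - 1) * Real.log 2 - Real.log 2 / 2 - 1 / 2
        - 45 * (k : ℝ) ^ 3 * (2 : ℝ) ^ (-(k : ℤ)) := by
  obtain ⟨ha1, ha2⟩ := hα
  have ha0 : 0 < α := by linarith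
  have hzp : (2:ℝ) ^ (-(k:ℤ)) = ((2:ℝ) ^ k)⁻¹ := by
    rw [zpow_neg, zpow_natCast]
  rw [hzp]
  set K : ℝ := (k : ℝ) with hKdef
  clear_value K
  set β : ℝ := 1 - α with hβ
  clear_value β
  set N : ℝ := 2 ^ (k - 1) with hN
  clear_value N
  set w : ℝ := ((2:ℝ) ^ k)⁻¹ with hw
  clear_value w
  have hb0 : 0 ≤ β := by rw [hβ]; linarith
  have hb1 : β < 0.1 := by rw [hβ]; linarith
  have hK : (166 : ℝ) ≤ K := by rw [hKdef]; exact_mod_cast hk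
  have hl2a : (0.6931471803 : ℝ) < Real.log 2 := Real.log_two_gt_d9
  have hl2b : Real.log 2 < 0.6931471808 := Real.log_two_lt_d9
  have hpk : (2:ℝ) ^ k = 2 * N := by
    rw [hN, ← pow_succ']
    congr 1
    omega
  have hNpos : 0 < N := by rw [hN]; positivity
  have hw0 : 0 < w := by rw [hw]; positivity
  have hwN : w * (2 * N) = 1 := by
    rw [hw, hpk]; field_simp
  have hKN : K ≤ N := by
    rw [hKdef, hN]
    exact_mod_cast k_le_pow hk
  have hN32 : (32 : ℝ) ≤ N := by
    rw [hN]
    calc (32:ℝ) = 2 ^ 5 := by norm_num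
      _ ≤ 2 ^ (k - 1) := pow_le_pow_right₀ one_le_two (by omega)
  set ε : ℝ := 45 * K ^ 3 * w with hε
  clear_value ε
  have hε0 : 0 ≤ ε := by rw [hε]; positivity
  -- entropy upper bound
  have hl2pos : (0:ℝ) < Real.log 2 := by linarith
  set l : ℝ := Real.log β with hl
  clear_value l
  set g : ℝ := β * (1 - l) with hg
  clear_value g
  have hent : entH α ≤ g := by
    rw [entH, hg, show (1 - α) = β from hβ.symm, ← hl]
    have hlog : 1 - α⁻¹ ≤ Real.log α := inv_log_aux ha0
    have hinv : α * α⁻¹ = 1 := mul_inv_cancel₀ ha0.ne'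
    have h1' := mul_le_mul_of_nonneg_left hlog ha0.le
    have h1 : -α * Real.log α ≤ β := by linarith [h1', hinv]
    linarith
  -- the key inequality
  have key : g * (N - 1/2) - (Real.log 2 - g) * ((N - 2) * K * β) ≤ 1/2 + ε := by
    rcases eq_or_lt_of_le hb0 with h0 | hbpos
    · rw [hg, ← h0]
      ring_nf
      linarith
    · have hlneg : l < 0 := by
        rw [hl]; exact Real.log_neg hbpos (by linarith)
      set m : ℕ := 9 * k / 20 with hm
      clear_value m
      have hm74 : 74 ≤ m := by omega
      have hmk : 20 * m ≤ 9 * k := by omega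
      have hMpos : (0:ℝ) < 2 ^ m := by positivity
      rcases le_or_gt 1 (β * 2 ^ m) with hcase | hcase
      · -- Case A : β ≥ 2^{-m}
        have hβlb : (1:ℝ) / 2 ^ m ≤ β := (div_le_iff₀ hMpos).mpr (by linarith)
        have hLub : -l ≤ (m:ℝ) * Real.log 2 := by
          have h1 : Real.log ((1:ℝ) / 2 ^ m) ≤ Real.log β := Real.log_le_log (by positivity) hβlb
          rw [one_div, Real.log_inv, Real.log_pow, ← hl] at h1
          linarith
        have hmle : (m:ℝ) ≤ 0.45 * K := by
          rw [hKdef]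
          have : ((20 * m : ℕ) : ℝ) ≤ ((9 * k : ℕ) : ℝ) := by exact_mod_cast hmk
          push_cast at this
          linarith
        have hm0 : (0:ℝ) ≤ (m:ℝ) := by positivity
        have hgub : g ≤ 0.3311 := by
          have h1 : g ≤ 0.1 * (1 - Real.log 0.1) := by
            rw [hg, hl]; exact g_mono hbpos hb1.le (by norm_num)
          have h2 : Real.log (0.1:ℝ) = -Real.log 10 := by
            rw [show (0.1:ℝ) = 10⁻¹ by norm_num, Real.log_inv]
          rw [h2] at h1
          linarith [log_ten_ub]
        have hD : 0.35 ≤ Real.log 2 - g := by linarith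
        have hg2 : g ≤ β * (1 + (m:ℝ) * Real.log 2) := by
          rw [hg]
          have : 1 - l ≤ 1 + (m:ℝ) * Real.log 2 := by linarith
          exact mul_le_mul_of_nonneg_left this hb0
        have hQ : 0 ≤ (N - 2) * K * β := by
          apply mul_nonneg (mul_nonneg (by linarith) (by linarith)) hb0
        have t1 : g * (N - 1/2) ≤ β * (1 + (m:ℝ) * Real.log 2) * (N - 1/2) :=
          mul_le_mul_of_nonneg_right hg2 (by linarith)
        have t2 : 0.35 * ((N - 2) * K * β) ≤ (Real.log 2 - g) * ((N - 2) * K * β) :=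
          mul_le_mul_of_nonneg_right hD hQ
        have hml : (m:ℝ) * Real.log 2 ≤ 0.311917 * K := by
          have q1 : (m:ℝ) * Real.log 2 ≤ (0.45 * K) * Real.log 2 :=
            mul_le_mul_of_nonneg_right hmle hl2pos.le
          have q2 : (0.45 * K) * Real.log 2 ≤ (0.45 * K) * 0.6931471808 :=
            mul_le_mul_of_nonneg_left hl2b.le (by linarith)
          linarith
        have hmlog0 : 0 ≤ (m:ℝ) * Real.log 2 := mul_nonneg hm0 hl2pos.le
        have hbr : (1 + (m:ℝ) * Real.log 2) * (N - 1/2) - 0.35 * (K * (N - 2)) ≤ 0 := by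
          linarith [mul_le_mul_of_nonneg_right hml hNpos.le,
            mul_le_mul_of_nonneg_right hK hNpos.le, hKN, hmlog0, hNpos]
        have hfinal : β * (1 + (m:ℝ) * Real.log 2) * (N - 1/2) - 0.35 * ((N - 2) * K * β) ≤ 0 := by
          have hq := mul_le_mul_of_nonneg_left hbr hb0
          have hq2 : β * ((1 + (m:ℝ) * Real.log 2) * (N - 1/2) - 0.35 * (K * (N - 2)))
              = β * (1 + (m:ℝ) * Real.log 2) * (N - 1/2) - 0.35 * ((N - 2) * K * β) := by ring
          linarith [hq, hq2.symm.le, hq2.le]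
        linarith
      · -- Case B : β < 2^{-m}
        set s : ℝ := l + K * Real.log 2 with hs
        clear_value s
        set u : ℝ := β * 2 ^ k with hu
        clear_value u
        have hu0 : 0 < u := by rw [hu]; exact mul_pos hbpos (by positivity)
        have hsu : Real.log u = s := by
          rw [hu, Real.log_mul hbpos.ne' (by positivity), Real.log_pow, hs, ← hl, hKdef]
        have huN : β * N = u / 2 := by
          rw [hu, hpk]; ring
        have hβuw : β = u * w := by
          rw [hu, hw]
          field_simp
        have hident : g * (N - 1/2) - (Real.log 2 - g) * ((N - 2) * K * β)
            = β * (1 - s) * (N - 1/2) + 1.5 * K * β * Real.log 2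
              + K * β ^ 2 * (1 - l) * (N - 2) := by
          rw [hg, hs]; ring
        rw [hident]
        have hl2pos : (0:ℝ) < Real.log 2 := by linarith
        rcases le_or_gt u 10 with hu10 | hu10
        · -- subcase 2a : u ≤ 10
          have hK0 : (0:ℝ) ≤ K := by linarith
          have hβsmall : β ≤ 10 * w := by
            rw [hβuw]
            exact mul_le_mul_of_nonneg_right hu10 hw0.le
          have hT1 : β * (1 - s) * (N - 1/2) ≤ 1/2 := by
            have a1 : u * (1 - s) ≤ 1 := by
              have := mul_one_sub_log_le_one hu0
              rwa [hsu] at this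
            have a2 : β * (1 - s) * (N - 1/2) = (u * (1 - s)) * ((N - 1/2) * w) := by
              rw [hβuw]; ring
            have a3 : 0 ≤ (N - 1/2) * w := mul_nonneg (by linarith) hw0.le
            have a4 : (N - 1/2) * w ≤ 1/2 := by linarith [hwN, hw0.le]
            rw [a2]
            calc (u * (1 - s)) * ((N - 1/2) * w) ≤ 1 * ((N - 1/2) * w) :=
                  mul_le_mul_of_nonneg_right a1 a3
              _ ≤ 1/2 := by linarith
          have hT2 : 1.5 * K * β * Real.log 2 ≤ 10.4 * K * w := by
            have hc0 : (0:ℝ) ≤ 1.5 * K * Real.log 2 :=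
              mul_nonneg (mul_nonneg (by norm_num) hK0) hl2pos.le
            have c1 : (1.5 * K * Real.log 2) * β ≤ (1.5 * K * Real.log 2) * (10 * w) :=
              mul_le_mul_of_nonneg_left hβsmall hc0
            have c2 : (15 * K * w) * Real.log 2 ≤ (15 * K * w) * 0.6931471808 :=
              mul_le_mul_of_nonneg_left hl2b.le
                (mul_nonneg (mul_nonneg (by norm_num) hK0) hw0.le)
            have c3 : (0:ℝ) ≤ K * w := mul_nonneg hK0 hw0.le
            linarith
          have hT3 : K * β ^ 2 * (1 - l) * (N - 2) ≤ (55 * K + 35 * K ^ 2) * w := by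
            have d1 : β * (-s) ≤ w := by
              have e0 := mul_neg_log_le_one hu0
              rw [hsu] at e0
              have e : β * (-s) = w * (u * (-s)) := by rw [hβuw]; ring
              rw [e]
              calc w * (u * (-s)) ≤ w * 1 := mul_le_mul_of_nonneg_left e0 hw0.le
                _ = w := mul_one w
            have dq : K * Real.log 2 ≤ K * 0.6931471808 :=
              mul_le_mul_of_nonneg_left hl2b.le hK0
            have d2 : β * (1 + K * Real.log 2) ≤ (10 * w) * (1 + K * 0.6931471808) := by
              apply mul_le_mul hβsmall (by linarith)
                (by linarith [mul_nonneg hK0 hl2pos.le])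
                (by linarith [mul_nonneg (by norm_num : (0:ℝ) ≤ (10:ℝ)) hw0.le])
            have hqub : β * (1 - l) ≤ (11 + 7 * K) * w := by
              have e1 : β * (1 - l) = β * (1 + K * Real.log 2) + β * (-s) := by
                rw [hs]; ring
              have e2 : (0:ℝ) ≤ K * w := mul_nonneg hK0 hw0.le
              linarith
            have hq0 : 0 ≤ β * (1 - l) := mul_nonneg hb0 (by linarith)
            have hr0 : 0 ≤ β * (N - 2) := mul_nonneg hb0 (by linarith)
            have hr5 : β * (N - 2) ≤ 5 := by linarith [huN, hu10, hb0]
            have e3 : K * β ^ 2 * (1 - l) * (N - 2) = K * ((β * (1 - l)) * (β * (N - 2))) := by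
              ring
            rw [e3]
            have e4 : (β * (1 - l)) * (β * (N - 2)) ≤ ((11 + 7 * K) * w) * 5 :=
              mul_le_mul hqub hr5 hr0 (mul_nonneg (by linarith) hw0.le)
            have e5 : K * ((β * (1 - l)) * (β * (N - 2))) ≤ K * (((11 + 7 * K) * w) * 5) :=
              mul_le_mul_of_nonneg_left e4 hK0
            have e6 : K * (((11 + 7 * K) * w) * 5) = (55 * K + 35 * K ^ 2) * w := by ring
            linarith
          have hnum : 10.4 * K + (55 * K + 35 * K ^ 2) ≤ 45 * K ^ 3 := by
            have p1 : 0 ≤ K * K * (K - 166) :=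
              mul_nonneg (mul_nonneg hK0 hK0) (by linarith)
            have p2 : 0 ≤ K * (K - 166) := mul_nonneg hK0 (by linarith)
            linarith [p1, p2, hK0]
          have hsum : (10.4 * K + (55 * K + 35 * K ^ 2)) * w ≤ (45 * K ^ 3) * w :=
            mul_le_mul_of_nonneg_right hnum hw0.le
          rw [hε]
          linarith
        · -- subcase 2b : u > 10
          have hK0 : (0:ℝ) ≤ K := by linarith
          have hs23 : (2.30:ℝ) ≤ s := by
            rw [← hsu]
            calc (2.30:ℝ) ≤ Real.log 10 := log_ten_lb
              _ ≤ Real.log u := Real.log_le_log (by norm_num) hu10.le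
          have hwsmall : w ≤ 0.02 := by
            linarith [mul_nonneg hw0.le (show (0:ℝ) ≤ N - 32 by linarith), hwN]
          have hc49 : (0.49:ℝ) ≤ (N - 1/2) * w := by linarith [hwN, hwsmall]
          have hT1 : β * (1 - s) * (N - 1/2) ≤ -(0.637) * u := by
            have a2 : β * (1 - s) * (N - 1/2) = (u * (1 - s)) * ((N - 1/2) * w) := by
              rw [hβuw]; ring
            have a5 : u * (1 - s) ≤ -(1.3) * u := by
              linarith [mul_nonneg (show (0:ℝ) ≤ s - 2.3 by linarith) hu0.le]
            have a6 : (u * (1 - s)) * ((N - 1/2) * w) ≤ (-(1.3) * u) * ((N - 1/2) * w) :=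
              mul_le_mul_of_nonneg_right a5 (by linarith [hc49])
            have a7 : (-(1.3) * u) * ((N - 1/2) * w) ≤ (-(1.3) * u) * 0.49 :=
              mul_le_mul_of_nonpos_left hc49 (by linarith)
            rw [a2]
            calc (u * (1 - s)) * ((N - 1/2) * w) ≤ (-(1.3) * u) * ((N - 1/2) * w) := a6
              _ ≤ (-(1.3) * u) * 0.49 := a7
              _ = -(0.637) * u := by ring
          have hT2 : 1.5 * K * β * Real.log 2 ≤ 0.011 * u := by
            have h105 : 105 * K ≤ (2:ℝ) ^ k := by
              rw [hKdef]
              exact_mod_cast hundredfive_le hk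
            have h1 : (2:ℝ) ^ k * w = 1 := by rw [hw]; field_simp
            have h0 := mul_le_mul_of_nonneg_right h105 hw0.le
            have hKw : 105 * (K * w) ≤ 1 := by linarith
            have e1 : Real.log 2 * u ≤ 0.6931471808 * u :=
              mul_le_mul_of_nonneg_right hl2b.le hu0.le
            have e2 : (K * w) * u ≤ (1/105) * u :=
              mul_le_mul_of_nonneg_right (by linarith) hu0.le
            have e3 : (K * w) * u * Real.log 2 ≤ (1/105) * u * Real.log 2 :=
              mul_le_mul_of_nonneg_right e2 hl2pos.le
            rw [hβuw]
            linarith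
          have hT3 : K * β ^ 2 * (1 - l) * (N - 2) ≤ 0.01 * u := by
            have hls : l = s - K * Real.log 2 := by rw [hs]; ring
            have dq : K * Real.log 2 ≤ K * 0.6931471808 :=
              mul_le_mul_of_nonneg_left hl2b.le hK0
            have f1 : 1 - l ≤ 0.7005 * K := by linarith
            have f2 : 36 * K ^ 2 ≤ (2:ℝ) ^ m := by
              rw [hKdef, hm]
              exact_mod_cast thirtysix_le hk
            have hβ36 : 36 * K ^ 2 * β ≤ 1 := by
              have hf := mul_le_mul_of_nonneg_right f2 hb0
              linarith [hf, hcase]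
            have hr5 : β * (N - 2) ≤ u / 2 := by linarith [huN, hb0]
            have hr0 : 0 ≤ β * (N - 2) := mul_nonneg hb0 (by linarith)
            have g1 : K * β ^ 2 * (1 - l) * (N - 2)
                = (K * (1 - l)) * (β * (β * (N - 2))) := by ring
            have g2 : K * (1 - l) ≤ 0.7005 * K ^ 2 := by
              have := mul_le_mul_of_nonneg_left f1 hK0
              linarith [this]
            have g3 : β * (β * (N - 2)) ≤ β * (u / 2) :=
              mul_le_mul_of_nonneg_left hr5 hb0
            have g4 : 0 ≤ β * (β * (N - 2)) := mul_nonneg hb0 hr0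
            have g6 : (K * (1 - l)) * (β * (β * (N - 2))) ≤ (0.7005 * K ^ 2) * (β * (u / 2)) :=
              mul_le_mul g2 g3 g4 (by positivity)
            have g7 : (0.7005 * K ^ 2) * (β * (u / 2)) = (0.7005 / 72) * ((36 * K ^ 2 * β) * u) := by
              ring
            have g8 : (36 * K ^ 2 * β) * u ≤ 1 * u :=
              mul_le_mul_of_nonneg_right hβ36 hu0.le
            rw [g1]
            linarith [g6, g7.le, g7.symm.le, g8, hu0.le]
          linarith [hε0, hu0]
  -- conclude from `key`
  have hid : phiAM k α - (N * Real.log 2 - Real.log 2 / 2 - 1 / 2 - ε)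
      = (1/2 + ε) - (g * (N - 1/2) - (Real.log 2 - g) * ((N - 2) * K * β))
        + (g - entH α) * ((N - 1/2) + (N - 2) * K * β) := by
    rw [phiAM, hg, hε, hβ, hKdef, hN, hw]
    ring
  have hpos : 0 ≤ (g - entH α) * ((N - 1/2) + (N - 2) * K * β) := by
    apply mul_nonneg (by linarith)
    have : 0 ≤ (N - 2) * K * β :=
      mul_nonneg (mul_nonneg (by linarith) (by linarith)) hb0
    linarith
  linarith
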